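/- (Deterministic bound on term A.) Let μ, f, y* ∈ ℝ, σ > 0 and β ≥ 0, and suppose |μ − f| ≤ √β · σ. Then f − y* ≤ σ·τ((μ − y*)/σ) + √β · σ. In words: the gap between the optimal function value and the current best observed response is at most the expected improvement at the optimum plus √β times the posterior standard deviation there. -/
import Mathlib


open Real MeasureTheory Filter

/-- The standard normal probability density function φ. -/
noncomputable def stdNormalPDF (z : ℝ) : ℝ := (Real.sqrt (2 * Real.pi))⁻¹ * Real.exp (-z ^ 2 / 2)

/-- The standard normal cumulative distribution function Φ. -/
noncomputable def stdNormalCDF (z : ℝ) : ℝ := ∫ t in Set.Iic z, stdNormalPDF t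

/-- τ(z) = z Φ(z) + φ(z). -/
noncomputable def tau (z : ℝ) : ℝ := z * stdNormalCDF z + stdNormalPDF z

lemma pdf_eq (t : ℝ) : stdNormalPDF t = (Real.sqrt (2 * Real.pi))⁻¹ * Real.exp (-(1/2) * t ^ 2) := by
  unfold stdNormalPDF; ring_nf

lemma pdf_nonneg (t : ℝ) : 0 ≤ stdNormalPDF t := by
  unfold stdNormalPDF
  positivity

lemma pdf_pos (t : ℝ) : 0 < stdNormalPDF t := by
  unfold stdNormalPDF
  have : 0 < Real.sqrt (2 * Real.pi) := Real.sqrt_pos.2 (by positivity)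
  positivity

lemma pdf_integrable : Integrable stdNormalPDF := by
  have : Integrable (fun t : ℝ => Real.exp (-(1/2) * t ^ 2)) := integrable_exp_neg_mul_sq (by norm_num)
  have h2 := this.const_mul (Real.sqrt (2 * Real.pi))⁻¹
  refine h2.congr ?_
  filter_upwards with t
  rw [pdf_eq]

lemma pdf_total : ∫ t, stdNormalPDF t = 1 := by
  have h : ∫ t, stdNormalPDF t = (Real.sqrt (2 * Real.pi))⁻¹ * ∫ t : ℝ, Real.exp (-(1/2) * t ^ 2) := by
    rw [← integral_const_mul]
    congr 1; ext t; rw [pdf_eq]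
  rw [h, integral_gaussian]
  rw [div_div_eq_mul_div, div_one, mul_comm π 2]
  exact inv_mul_cancel₀ (ne_of_gt (Real.sqrt_pos.2 (by positivity)))

lemma hasDerivAt_negexp (t : ℝ) :
    HasDerivAt (fun x : ℝ => -stdNormalPDF x) (t * stdNormalPDF t) t := by
  have h1 : HasDerivAt (fun x : ℝ => -x ^ 2 / 2) (-t) t := by
    have := (hasDerivAt_pow 2 t).neg.div_const 2
    simpa using this.congr_deriv (by push_cast; ring)
  have h2 := (h1.exp).const_mul (Real.sqrt (2 * Real.pi))⁻¹
  have h3 := h2.neg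
  refine h3.congr_deriv ?_
  unfold stdNormalPDF
  ring

lemma tendsto_pdf_atTop : Tendsto (fun t : ℝ => -stdNormalPDF t) atTop (nhds 0) := by
  have h1 : Tendsto (fun t : ℝ => -t ^ 2 / 2) atTop atBot := by
    apply Tendsto.atBot_div_const (by norm_num)
    exact tendsto_neg_atBot_iff.2 (tendsto_pow_atTop (by norm_num))
  have h2 : Tendsto (fun t : ℝ => Real.exp (-t ^ 2 / 2)) atTop (nhds 0) :=
    Real.tendsto_exp_atBot.comp h1
  have h3 := (h2.const_mul (Real.sqrt (2 * Real.pi))⁻¹).neg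
  simpa [stdNormalPDF] using h3

lemma integral_Ioi_mul_pdf (z : ℝ) :
    ∀ hz : 0 ≤ z, ∫ t in Set.Ioi z, t * stdNormalPDF t = stdNormalPDF z := by
  intro hz
  have := integral_Ioi_of_hasDerivAt_of_nonneg' (g := fun x => -stdNormalPDF x)
    (g' := fun t => t * stdNormalPDF t) (a := z) (l := 0)
    (fun x _ => hasDerivAt_negexp x)
    (fun x hx => mul_nonneg (le_trans hz (le_of_lt hx)) (pdf_nonneg x))
    tendsto_pdf_atTop
  simpa using this

lemma integrableOn_Ioi_mul_pdf (z : ℝ) (hz : 0 ≤ z) :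
    IntegrableOn (fun t => t * stdNormalPDF t) (Set.Ioi z) := by
  exact integrableOn_Ioi_deriv_of_nonneg' (fun x _ => hasDerivAt_negexp x)
    (fun x hx => mul_nonneg (le_trans hz (le_of_lt hx)) (pdf_nonneg x))
    tendsto_pdf_atTop

lemma cdf_add_tail (z : ℝ) : stdNormalCDF z + ∫ t in Set.Ioi z, stdNormalPDF t = 1 := by
  rw [stdNormalCDF, intervalIntegral.integral_Iic_add_Ioi pdf_integrable.integrableOn
    pdf_integrable.integrableOn, pdf_total]

lemma cdf_le_one (z : ℝ) : stdNormalCDF z ≤ 1 := by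
  have h := cdf_add_tail z
  have : 0 ≤ ∫ t in Set.Ioi z, stdNormalPDF t :=
    setIntegral_nonneg measurableSet_Ioi (fun t _ => pdf_nonneg t)
  linarith

lemma le_tau (z : ℝ) : z ≤ tau z := by
  rcases le_or_gt z 0 with hz | hz
  · have := pdf_nonneg z
    have hc := cdf_le_one z
    unfold tau
    nlinarith
  · -- 0 < z : need φ z ≥ z (1 - Φ z)
    have htail : 1 - stdNormalCDF z = ∫ t in Set.Ioi z, stdNormalPDF t := by
      have := cdf_add_tail z; linarith
    have hmono : ∫ t in Set.Ioi z, z * stdNormalPDF t ≤ ∫ t in Set.Ioi z, t * stdNormalPDF t := by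
      apply setIntegral_mono_on
      · exact (pdf_integrable.const_mul z).integrableOn
      · exact integrableOn_Ioi_mul_pdf z hz.le
      · exact measurableSet_Ioi
      · intro t ht
        exact mul_le_mul_of_nonneg_right (le_of_lt ht) (pdf_nonneg t)
    rw [integral_Ioi_mul_pdf z hz.le, integral_const_mul] at hmono
    unfold tau
    nlinarith [htail]

theorem term_A_bound (μ f ystar σ β : ℝ) (hσ : 0 < σ) (hβ : 0 ≤ β)
    (h : |μ - f| ≤ Real.sqrt β * σ) :
    f - ystar ≤ σ * tau ((μ - ystar) / σ) + Real.sqrt β * σ := by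
  have h1 : f - μ ≤ Real.sqrt β * σ := by
    calc f - μ ≤ |f - μ| := le_abs_self _
    _ = |μ - f| := abs_sub_comm _ _
    _ ≤ _ := h
  have h2 : (μ - ystar) / σ ≤ tau ((μ - ystar) / σ) := le_tau _
  have h3 : μ - ystar ≤ σ * tau ((μ - ystar) / σ) := by
    rw [div_le_iff₀ hσ] at h2
    linarith [h2]
  linarith
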